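/- Let P be a convex open subset of ℝ² with compact closure and [a,b] the projection of its closure to the x-axis. Then the vertical section length function f(t) = length of p_x⁻¹(t) ∩ closure(P) is continuous on [a,b]. -/

import Mathlib

open MeasureTheory Set

theorem sSup_section_continuous (C : Set (ℝ × ℝ)) (hC : Convex ℝ C) (hcpt : IsCompact C) :
    ContinuousOn (fun t => sSup {y : ℝ | (t, y) ∈ C}) (Prod.fst '' C) := by
  obtain ⟨M, hM0, hM⟩ : ∃ M, 0 ≤ M ∧ ∀ p ∈ C, |p.2| ≤ M := by
    obtain ⟨r, hr⟩ := hcpt.isBounded.subset_closedBall 0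
    refine ⟨max r 0, le_max_right _ _, fun p hp => ?_⟩
    have h1 := hr hp
    rw [Metric.mem_closedBall, dist_zero_right] at h1
    calc |p.2| = ‖p.2‖ := rfl
      _ ≤ ‖p‖ := norm_snd_le p
      _ ≤ max r 0 := h1.trans (le_max_left _ _)
  set S : ℝ → Set ℝ := fun t => {y : ℝ | (t, y) ∈ C} with hS
  have hSbddA : ∀ t, BddAbove (S t) := fun t =>
    ⟨M, fun y hy => (le_abs_self y).trans (hM (t, y) hy)⟩
  have hSbddB : ∀ t, BddBelow (S t) := fun t =>
    ⟨-M, fun y hy => neg_le_of_abs_le (hM (t, y) hy)⟩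
  have hScl : ∀ t, IsClosed (S t) := fun t =>
    hcpt.isClosed.preimage (continuous_const.prodMk continuous_id)
  set H : ℝ → ℝ := fun t => sSup (S t) with hH
  set K : Set ℝ := Prod.fst '' C with hK
  have hSne : ∀ t ∈ K, (S t).Nonempty := by
    rintro t ⟨p, hp, rfl⟩; exact ⟨p.2, hp⟩
  have hmem : ∀ t ∈ K, (t, H t) ∈ C := fun t ht =>
    (hScl t).csSup_mem (hSne t ht) (hSbddA t)
  have hle : ∀ t y, (t, y) ∈ C → y ≤ H t := fun t y hy => le_csSup (hSbddA t) hy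
  have hHbd : ∀ t ∈ K, |H t| ≤ M := fun t ht => hM (t, H t) (hmem t ht)
  have hKcpt : IsCompact K := hcpt.image continuous_fst
  intro t ht
  have hKne : K.Nonempty := ⟨t, ht⟩
  set a : ℝ := sInf K with ha'
  set b : ℝ := sSup K with hb'
  have haK : a ∈ K := hKcpt.isClosed.csInf_mem hKne hKcpt.isBounded.bddBelow
  have hbK : b ∈ K := hKcpt.isClosed.csSup_mem hKne hKcpt.isBounded.bddAbove
  have hKconv : Convex ℝ K := hC.is_linear_image ⟨fun _ _ => rfl, fun _ _ => rfl⟩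
  have hKIcc : K ⊆ Icc a b := fun x hx =>
    ⟨csInf_le hKcpt.isBounded.bddBelow hx, le_csSup hKcpt.isBounded.bddAbove hx⟩
  -- concavity
  have hconc : ∀ s ∈ K, ∀ u ∈ K, ∀ l : ℝ, 0 ≤ l → l ≤ 1 →
      (1 - l) * H s + l * H u ≤ H ((1 - l) * s + l * u) := by
    intro s hs u hu l hl0 hl1
    have hcombo : (1 - l) • ((s, H s) : ℝ × ℝ) + l • (u, H u) ∈ C :=
      hC (hmem s hs) (hmem u hu) (by linarith) hl0 (by ring)
    have heq : (1 - l) • ((s, H s) : ℝ × ℝ) + l • (u, H u)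
        = ((1 - l) * s + l * u, (1 - l) * H s + l * H u) := by
      simp [Prod.ext_iff, smul_eq_mul]
    rw [heq] at hcombo
    exact hle _ _ hcombo
  rw [Metric.continuousWithinAt_iff]
  intro ε hε
  -- upper semicontinuity bound
  set E : Set ℝ := Prod.fst '' (C ∩ {p : ℝ × ℝ | H t + ε ≤ p.2}) with hE
  have hEcl : IsClosed E :=
    ((hcpt.inter_right (isClosed_le continuous_const continuous_snd)).image
      continuous_fst).isClosed
  have htE : t ∉ E := by
    rintro ⟨p, ⟨hpC, hpe⟩, rfl⟩
    have : p.2 ≤ H p.1 := hle p.1 p.2 hpC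
    simp only [mem_setOf_eq] at hpe
    linarith
  obtain ⟨δ₁, hδ₁0, hδ₁⟩ := Metric.isOpen_iff.mp hEcl.isOpen_compl t htE
  -- lower bound radii from concavity
  set D : ℝ := 2 * M + 1 with hD
  have hD0 : 0 < D := by positivity
  set δR : ℝ := if t < b then (b - t) * ε / D else 1 with hδR
  set δL : ℝ := if a < t then (t - a) * ε / D else 1 with hδL
  have hδR0 : 0 < δR := by
    rw [hδR]; split
    · rename_i h
      have : (0:ℝ) < b - t := by linarith
      positivity
    · norm_num
  have hδL0 : 0 < δL := by
    rw [hδL]; split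
    · rename_i h
      have : (0:ℝ) < t - a := by linarith
      positivity
    · norm_num
  refine ⟨min δ₁ (min δL δR), lt_min hδ₁0 (lt_min hδL0 hδR0), fun t' ht' hdist => ?_⟩
  rw [Real.dist_eq] at hdist ⊢
  rw [abs_sub_lt_iff]
  have hd1 : |t' - t| < δ₁ := lt_of_lt_of_le hdist (min_le_left _ _)
  have hdL : |t' - t| < δL := lt_of_lt_of_le hdist ((min_le_right _ _).trans (min_le_left _ _))
  have hdR : |t' - t| < δR := lt_of_lt_of_le hdist ((min_le_right _ _).trans (min_le_right _ _))
  constructor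
  · -- H t' < H t + ε  (usc)
    by_contra hcon
    push_neg at hcon
    have ht'E : t' ∈ E := ⟨(t', H t'), ⟨hmem t' ht', by simpa using by linarith⟩, rfl⟩
    exact (hδ₁ (by rw [Metric.mem_ball, Real.dist_eq]; exact hd1)) ht'E
  · -- H t - H t' < ε (concavity)
    rcases lt_trichotomy t' t with hlt | heq | hgt
    · -- t' < t : use a
      have hat : a < t := lt_of_le_of_lt (hKIcc ht').1 hlt
      have hδLeq : δL = (t - a) * ε / D := by rw [hδL, if_pos hat]
      set l : ℝ := (t - t') / (t - a) with hl
      have hta : 0 < t - a := by linarith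
      have hl0 : 0 ≤ l := by
        rw [hl]; exact div_nonneg (by linarith) (by linarith)
      have hl1 : l ≤ 1 := by
        rw [hl, div_le_one hta]
        have := (hKIcc ht').1; linarith
      have hcombo : (1 - l) * t + l * a = t' := by
        rw [hl]; field_simp; ring
      have hcc := hconc t ht a haK l hl0 hl1
      rw [hcombo] at hcc
      have hlsmall : l < ε / D := by
        rw [hl, div_lt_div_iff₀ hta hD0]
        have h1 : t - t' ≤ |t' - t| := by rw [abs_sub_comm]; exact le_abs_self _
        have h2 : |t' - t| < (t - a) * ε / D := hδLeq ▸ hdL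
        rw [lt_div_iff₀ hD0] at h2
        calc (t - t') * D ≤ |t' - t| * D := by nlinarith
          _ < (t - a) * ε := by linarith [mul_lt_mul_of_pos_right h2 hD0]
          _ = ε * (t - a) := by ring
      have hHa : |H a| ≤ M := hHbd a haK
      have hHt := hHbd t ht
      rw [abs_le] at hHa hHt
      have hεD : l * D < ε := by
        have := mul_lt_mul_of_pos_right hlsmall hD0
        rwa [div_mul_cancel₀ _ (ne_of_gt hD0)] at this
      have k1 : H t - H t' ≤ l * (H t - H a) := by linarith
      have k2 : l * (H t - H a) ≤ l * D := mul_le_mul_of_nonneg_left (by linarith) hl0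
      linarith
    · simp [heq]; linarith
    · -- t < t' : use b
      have htb : t < b := lt_of_lt_of_le hgt (hKIcc ht').2
      have hδReq : δR = (b - t) * ε / D := by rw [hδR, if_pos htb]
      set l : ℝ := (t' - t) / (b - t) with hl
      have htb' : 0 < b - t := by linarith
      have hl0 : 0 ≤ l := by
        rw [hl]; exact div_nonneg (by linarith) (by linarith)
      have hl1 : l ≤ 1 := by
        rw [hl, div_le_one htb']
        have := (hKIcc ht').2; linarith
      have hcombo : (1 - l) * t + l * b = t' := by
        rw [hl]; field_simp; ring
      have hcc := hconc t ht b hbK l hl0 hl1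
      rw [hcombo] at hcc
      have hlsmall : l < ε / D := by
        rw [hl, div_lt_div_iff₀ htb' hD0]
        have h1 : t' - t ≤ |t' - t| := le_abs_self _
        have h2 : |t' - t| < (b - t) * ε / D := hδReq ▸ hdR
        rw [lt_div_iff₀ hD0] at h2
        calc (t' - t) * D ≤ |t' - t| * D := by nlinarith
          _ < (b - t) * ε := by linarith
          _ = ε * (b - t) := by ring
      have hHb := hHbd b hbK
      have hHt := hHbd t ht
      rw [abs_le] at hHb hHt
      have hεD : l * D < ε := by
        have := mul_lt_mul_of_pos_right hlsmall hD0
        rwa [div_mul_cancel₀ _ (ne_of_gt hD0)] at this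
      have k1 : H t - H t' ≤ l * (H t - H b) := by linarith
      have k2 : l * (H t - H b) ≤ l * D := mul_le_mul_of_nonneg_left (by linarith) hl0
      linarith

open MeasureTheory Set

theorem section_length_continuous (P : Set (ℝ × ℝ)) (hP : Convex ℝ P) (hPo : IsOpen P)
    (hne : P.Nonempty) (hcpt : IsCompact (closure P)) :
    ContinuousOn (fun t => (volume { y : ℝ | (t, y) ∈ closure P }).toReal)
      (Prod.fst '' closure P) := by
  set C : Set (ℝ × ℝ) := closure P with hCdef
  have hCconv : Convex ℝ C := hP.closure
  have hCcl : IsClosed C := isClosed_closure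
  obtain ⟨M, hM0, hM⟩ : ∃ M, 0 ≤ M ∧ ∀ p ∈ C, |p.2| ≤ M := by
    obtain ⟨r, hr⟩ := hcpt.isBounded.subset_closedBall 0
    refine ⟨max r 0, le_max_right _ _, fun p hp => ?_⟩
    have h1 := hr hp
    rw [Metric.mem_closedBall, dist_zero_right] at h1
    calc |p.2| = ‖p.2‖ := rfl
      _ ≤ ‖p‖ := norm_snd_le p
      _ ≤ max r 0 := h1.trans (le_max_left _ _)
  set S : ℝ → Set ℝ := fun t => {y : ℝ | (t, y) ∈ C} with hS
  have hSbddA : ∀ t, BddAbove (S t) := fun t =>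
    ⟨M, fun y hy => (le_abs_self y).trans (hM (t, y) hy)⟩
  have hSbddB : ∀ t, BddBelow (S t) := fun t =>
    ⟨-M, fun y hy => neg_le_of_abs_le (hM (t, y) hy)⟩
  have hScl : ∀ t, IsClosed (S t) := fun t =>
    hCcl.preimage (continuous_const.prodMk continuous_id)
  -- reflected set
  set C' : Set (ℝ × ℝ) := (fun p : ℝ × ℝ => (p.1, -p.2)) '' C with hC'def
  have hC'conv : Convex ℝ C' := by
    refine hCconv.is_linear_image ⟨fun x y => ?_, fun c x => ?_⟩
    · simp [Prod.ext_iff]; ring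
    · simp [Prod.ext_iff, smul_eq_mul]
  have hC'cpt : IsCompact C' := hcpt.image (continuous_fst.prodMk continuous_snd.neg)
  have hK' : Prod.fst '' C' = Prod.fst '' C := by
    rw [hC'def, Set.image_image]
  have hsec : ∀ t : ℝ, {y : ℝ | (t, y) ∈ C'} = -(S t) := by
    intro t
    ext y
    simp only [hC'def, mem_image, mem_setOf_eq, Set.mem_neg, hS, Prod.ext_iff]
    constructor
    · rintro ⟨p, hp, h1, h2⟩
      have : p = (t, -y) := by
        ext
        · exact h1
        · simp [← h2]
      rwa [this] at hp
    · intro h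
      exact ⟨(t, -y), h, rfl, by simp⟩
  have hGeq : ∀ t : ℝ, sInf (S t) = -sSup {y : ℝ | (t, y) ∈ C'} := by
    intro t
    rw [hsec t, ← Real.sInf_def]
  -- continuity of sSup and sInf of sections
  have Hcont : ContinuousOn (fun t => sSup (S t)) (Prod.fst '' C) :=
    sSup_section_continuous C hCconv hcpt
  have Gcont : ContinuousOn (fun t => sInf (S t)) (Prod.fst '' C) := by
    have := (sSup_section_continuous C' hC'conv hC'cpt).neg
    rw [hK'] at this
    exact this.congr fun t _ => hGeq t
  refine (Hcont.sub Gcont).congr fun t ht => ?_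
  -- section is an interval
  have hne' : (S t).Nonempty := by
    obtain ⟨p, hp, rfl⟩ := ht
    exact ⟨p.2, hp⟩
  have hconvS : Convex ℝ (S t) := by
    intro y1 h1 y2 h2 a b ha hb hab
    have hc := hCconv h1 h2 ha hb hab
    have heq : a • ((t, y1) : ℝ × ℝ) + b • (t, y2) = (t, a * y1 + b * y2) := by
      simp [Prod.ext_iff, smul_eq_mul]
      linear_combination t * hab
    rw [heq] at hc
    exact hc
  have hIcc : S t = Icc (sInf (S t)) (sSup (S t)) :=
    subset_antisymm (fun y hy => ⟨csInf_le (hSbddB t) hy, le_csSup (hSbddA t) hy⟩)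
      (hconvS.ordConnected.out ((hScl t).csInf_mem hne' (hSbddB t))
        ((hScl t).csSup_mem hne' (hSbddA t)))
  have hv : volume (S t) = ENNReal.ofReal (sSup (S t) - sInf (S t)) := by
    conv_lhs => rw [hIcc]
    rw [Real.volume_Icc]
  show (volume (S t)).toReal = _
  rw [hv, ENNReal.toReal_ofReal (sub_nonneg.2 (csInf_le_csSup hne' (hSbddB t) (hSbddA t)))]
  rfl
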